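/- Let S be an inverse semigroup with idempotents E, A a C*-algebra with compatible S-action α, and A ⋊ E the crossed product by E with the induced S-action β_s(a ⋊ e) = α_s(a) ⋊ ses*. Then the map γ defined on generators by γ((a ⋊ e) ⊠ s) = a ⋊ (es), for s ∈ S, e ∈ E with e ≤ ss* and a ∈ A_e, extends to a *-homomorphism from the *-algebra underlying (A ⋊ E) ⊠ S to the *-algebra underlying A ⋊ S; in particular γ is multiplicative: γ(((a⋊e)⊠s)((b⋊f)⊠t)) = γ((a⋊e)⊠s)·γ((b⋊f)⊠t). -/

import Mathlib

/-- An inverse semigroup: a semigroup in which every element `s` has a unique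
generalized inverse `star s` with `s * star s * s = s` and `star s * s * star s = star s`. -/
class InverseSemigroup (S : Type u) extends Semigroup S, Star S where
  mul_star_mul : ∀ s : S, s * star s * s = s
  star_mul_star : ∀ s : S, star s * s * star s = star s
  star_unique : ∀ s t : S, s * t * s = s → t * s * t = t → t = star s

variable {S A : Type} [InverseSemigroup S]
  [NonUnitalNormedRing A] [StarRing A] [CStarRing A]

/-- The convolution product `(a ⋊ s)(b ⋊ t) = a·α_s(b) ⋊ st` on finitely supported
formal sums (used both for `A ⋊ E` and for `A ⋊ S`). -/
noncomputable def convMul (α : S → A → A) (f g : S →₀ A) : S →₀ A :=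
  f.sum fun s a => g.sum fun t b => Finsupp.single (s * t) (a * α s b)

/-- The involution `(a ⋊ s)* = α_{s*}(a*) ⋊ s*`. -/
noncomputable def convStar (α : S → A → A) (f : S →₀ A) : S →₀ A :=
  f.sum fun s a => Finsupp.single (star s) (α (star s) (star a))

/-- The induced `S`-action on `A ⋊ E`: `β_s(a ⋊ e) = α_s(a) ⋊ ses*`. -/
noncomputable def betaExp (α : S → A → A) (s : S) (φ : S →₀ A) : S →₀ A :=
  φ.sum fun e a => Finsupp.single (s * e * star s) (α s a)

/-- The map `γ : (A ⋊ E) ⊠ S → A ⋊ S`, `γ((a ⋊ e) ⊠ s) = a ⋊ (es)`, on formal sums. -/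
noncomputable def gammaMap (F : S →₀ (S →₀ A)) : S →₀ A :=
  F.sum fun s φ => φ.sum fun e a => Finsupp.single (e * s) a

section ISG
variable {S : Type u} [InverseSemigroup S]

open InverseSemigroup

lemma isg_star_star (s : S) : star (star s) = s :=
  (star_unique (star s) s (star_mul_star s) (mul_star_mul s)).symm

lemma isg_star_idem {e : S} (he : e * e = e) : star e = e :=
  (star_unique e e (by rw [he, he]) (by rw [he, he])).symm

lemma isg_mul_star_self_idem (s : S) :
    (s * star s) * (s * star s) = s * star s := by
  have := mul_star_mul s
  calc (s * star s) * (s * star s) = (s * star s * s) * star s := by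
        simp only [mul_assoc]
    _ = s * star s := by rw [this]

lemma isg_star_self_mul_idem (s : S) :
    (star s * s) * (star s * s) = star s * s := by
  have := star_mul_star s
  calc (star s * s) * (star s * s) = (star s * s * star s) * s := by
        simp only [mul_assoc]
    _ = star s * s := by rw [this]

lemma isg_idem_mul_idem {p q : S} (hp : p * p = p) (hq : q * q = q) :
    (p * q) * (p * q) = p * q := by
  set x := star (p * q) with hx
  have h1 : (p * q) * x * (p * q) = p * q := mul_star_mul (p * q)
  have h2 : x * (p * q) * x = x := star_mul_star (p * q)
  have h1' : p * (q * (x * (p * q))) = p * q := by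
    conv_rhs => rw [← h1]
    simp only [mul_assoc]
  have h2' : ∀ y : S, x * (p * (q * (x * y))) = x * y := by
    intro y
    calc x * (p * (q * (x * y))) = (x * (p * q) * x) * y := by
          simp only [mul_assoc]
      _ = x * y := by rw [h2]
  have hp' : ∀ y : S, p * (p * y) = p * y := fun y => by rw [← mul_assoc, hp]
  have hq' : ∀ y : S, q * (q * y) = q * y := fun y => by rw [← mul_assoc, hq]
  have hA : q * x * p = x := by
    apply star_unique (p * q) (q * x * p)
    · show (p * q) * (q * x * p) * (p * q) = p * q
      calc (p * q) * (q * x * p) * (p * q)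
          = p * (q * (q * (x * (p * (p * q))))) := by simp only [mul_assoc]
        _ = p * (q * (x * (p * q))) := by rw [hq', hp']
        _ = p * q := h1'
    · show (q * x * p) * (p * q) * (q * x * p) = q * x * p
      calc (q * x * p) * (p * q) * (q * x * p)
          = q * (x * (p * (p * (q * (q * (x * p)))))) := by simp only [mul_assoc]
        _ = q * (x * (p * (q * (x * p)))) := by rw [hp', hq']
        _ = q * (x * p) := by rw [h2']
        _ = q * x * p := by rw [mul_assoc]
  have hxx : x * x = x := by
    conv_lhs => rw [← hA]
    calc (q * x * p) * (q * x * p)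
        = q * (x * (p * (q * (x * p)))) := by simp only [mul_assoc]
      _ = q * (x * p) := by rw [h2']
      _ = x := by rw [← mul_assoc, hA]
  have hpq : p * q = x := by
    calc p * q = star (star (p * q)) := (isg_star_star _).symm
      _ = star x := by rw [← hx]
      _ = x := isg_star_idem hxx
  rw [hpq]; exact hxx

lemma isg_idem_comm {e f : S} (he : e * e = e) (hf : f * f = f) :
    e * f = f * e := by
  have hef := isg_idem_mul_idem he hf
  have hfe := isg_idem_mul_idem hf he
  have he' : ∀ y : S, e * (e * y) = e * y := fun y => by rw [← mul_assoc, he]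
  have hf' : ∀ y : S, f * (f * y) = f * y := fun y => by rw [← mul_assoc, hf]
  have hef' : e * (f * (e * f)) = e * f := by
    conv_rhs => rw [← hef]
    simp only [mul_assoc]
  have hfe' : f * (e * (f * e)) = f * e := by
    conv_rhs => rw [← hfe]
    simp only [mul_assoc]
  have key : f * e = star (e * f) := by
    apply star_unique (e * f) (f * e)
    · calc (e * f) * (f * e) * (e * f)
          = e * (f * (f * (e * (e * f)))) := by simp only [mul_assoc]
        _ = e * (f * (e * f)) := by rw [hf', he']
        _ = e * f := hef'
    · calc (f * e) * (e * f) * (f * e)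
          = f * (e * (e * (f * (f * e)))) := by simp only [mul_assoc]
        _ = f * (e * (f * e)) := by rw [he', hf']
        _ = f * e := hfe'
  rw [key, isg_star_idem hef]

end ISG

section Finsupps
variable {S A : Type} [InverseSemigroup S]
  [NonUnitalNormedRing A] [StarRing A] [CStarRing A]

lemma gammaMap_single (p q : S) (a : A) :
    gammaMap (Finsupp.single p (Finsupp.single q a)) = Finsupp.single (q * p) a := by
  unfold gammaMap
  rw [Finsupp.sum_single_index]
  · rw [Finsupp.sum_single_index]; simp
  · simp

lemma convMul_single (α : S → A → A) (s t : S) (a b : A) (h0 : α s 0 = 0) :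
    convMul α (Finsupp.single s a) (Finsupp.single t b)
      = Finsupp.single (s * t) (a * α s b) := by
  unfold convMul
  rw [Finsupp.sum_single_index]
  · rw [Finsupp.sum_single_index]
    simp [h0]
  · simp

lemma betaExp_single (α : S → A → A) (s e : S) (a : A) (h0 : α s 0 = 0) :
    betaExp α s (Finsupp.single e a)
      = Finsupp.single (s * e * star s) (α s a) := by
  simp [betaExp, Finsupp.sum_single_index, h0]

lemma convStar_single (α : S → A → A) (s : S) (a : A) (h0 : α (star s) 0 = 0) :
    convStar α (Finsupp.single s a)
      = Finsupp.single (star s) (α (star s) (star a)) := by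
  simp [convStar, Finsupp.sum_single_index, h0]

end Finsupps

/-- the map `γ((a ⋊ e) ⊠ s) = a ⋊ (es)` (for `e ≤ ss*`, `a ∈ A_e`) extends
to a *-homomorphism from the *-algebra underlying `(A ⋊ E) ⊠ S` to that of `A ⋊ S`; in
particular `γ` is multiplicative and *-preserving on generators, where
`(x ⊠ s)(y ⊠ t) = x·β_s(y) ⊠ st` and `(x ⊠ s)* = β_{s*}(x*) ⊠ s*`. -/
theorem gammaMap_star_hom
    (α : S → A → A)
    (hadd : ∀ (s : S) (a b : A), α s (a + b) = α s a + α s b)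
    (hmulhom : ∀ (s : S) (a b : A), α s (a * b) = α s a * α s b)
    (hstarhom : ∀ (s : S) (a : A), α s (star a) = star (α s a))
    (hcomp : ∀ (s t : S) (a : A), α s (α t a) = α (s * t) a) :
    ∀ (s t e f : S) (a b : A),
      e * e = e → f * f = f →
      e * (s * star s) = e → f * (t * star t) = f →   -- e ≤ ss*, f ≤ tt*
      α e a = a → α f b = b →                          -- a ∈ A_e, b ∈ A_f
      -- multiplicativity on generators:
      gammaMap (Finsupp.single (s * t)
          (convMul α (Finsupp.single e a) (betaExp α s (Finsupp.single f b))))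
        = convMul α (gammaMap (Finsupp.single s (Finsupp.single e a)))
            (gammaMap (Finsupp.single t (Finsupp.single f b))) ∧
      -- *-preservation on generators:
      gammaMap (Finsupp.single (star s)
          (betaExp α (star s) (Finsupp.single e (star a))))
        = convStar α (gammaMap (Finsupp.single s (Finsupp.single e a))) := by
  intro s t e f a b he hf he2 hf2 hae hbf
  have h0 : ∀ u : S, α u 0 = 0 := by
    intro u
    have h := hadd u 0 0
    rw [add_zero] at h
    exact (left_eq_add.mp h)
  have hss := isg_mul_star_self_idem s
  have hcom : (s * star s) * e = e := by
    rw [← isg_idem_comm he hss]; exact he2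
  constructor
  · rw [betaExp_single α s f b (h0 s), convMul_single α e _ a _ (h0 e), gammaMap_single,
      gammaMap_single, gammaMap_single, convMul_single α _ _ a b (h0 _), hcomp e s b]
    have hidx : (e * (s * f * star s)) * (s * t) = (e * s) * (f * t) := by
      have h3 : f * (star s * s) = (star s * s) * f :=
        isg_idem_comm hf (isg_star_self_mul_idem s)
      have step1 : (e * (s * f * star s)) * (s * t)
          = e * ((s * (f * (star s * s))) * t) := by simp only [mul_assoc]
      rw [step1, h3]
      have h4 : s * ((star s * s) * f) = s * f := by
        rw [← mul_assoc, ← mul_assoc, InverseSemigroup.mul_star_mul]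
      rw [h4]; simp only [mul_assoc]
    rw [hidx]
  · rw [betaExp_single α (star s) e (star a) (h0 (star s)), gammaMap_single,
      gammaMap_single, convStar_single α _ _ (h0 _), isg_star_star s]
    have hse : star (e * s) = star s * e := by
      refine (InverseSemigroup.star_unique (e * s) (star s * e) ?_ ?_).symm
      · calc (e * s) * (star s * e) * (e * s)
            = e * (((s * star s) * e) * (e * s)) := by simp only [mul_assoc]
          _ = e * (e * (e * s)) := by rw [hcom]
          _ = e * s := by rw [← mul_assoc, he, ← mul_assoc, he]
      · calc (star s * e) * (e * s) * (star s * e)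
            = star s * (e * (e * ((s * star s) * e))) := by simp only [mul_assoc]
          _ = star s * (e * (e * e)) := by rw [hcom]
          _ = star s * e := by rw [he, he]
    have hidx2 : (star s * e * s) * star s = star s * e := by
      calc (star s * e * s) * star s = star s * (e * (s * star s)) := by
            simp only [mul_assoc]
        _ = star s * e := by rw [he2]
    have hcoef : α (star (e * s)) (star a) = α (star s) (star a) := by
      rw [hse, ← hcomp, hstarhom, hae]
    rw [hidx2, hcoef, hse]
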